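/- There is a bijection Θ between the set of functions f: {2,...,n-1} → [n] and the set of trees on [n] rooted at 1 (all edges directed toward 1), such that for every f and every vertex i ∈ [n], the degree of i in the undirected tree underlying Θ(f) equals 1 + |f⁻¹(i)|. -/

import Mathlib

open SimpleGraph Finset
set_option linter.unusedSectionVars false
namespace Stmt7Aux


variable {W : Type*} [DecidableEq W] {G : SimpleGraph W}

lemma exists_first_edge {x y : W} (w : G.Walk x y) (hxy : x ≠ y) :
    ∃ u, s(x, u) ∈ w.edges := by
  cases w with
  | nil => exact absurd rfl hxy
  | @cons _ u _ h w' => exact ⟨u, by simp⟩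

lemma exists_last_edge {x y : W} (w : G.Walk x y) (hxy : x ≠ y) :
    ∃ u, s(y, u) ∈ w.edges := by
  obtain ⟨u, hu⟩ := exists_first_edge w.reverse hxy.symm
  exact ⟨u, by simpa [SimpleGraph.Walk.edges_reverse] using hu⟩

/-- an interior vertex of a path has two distinct incident edges on the path -/
lemma path_two_edges {x y l : W} (p : G.Walk x y) (hp : p.IsPath)
    (hl : l ∈ p.support) (hlx : l ≠ x) (hly : l ≠ y) :
    ∃ e₁ e₂, e₁ ≠ e₂ ∧ e₁ ∈ p.edges ∧ e₂ ∈ p.edges ∧ l ∈ e₁ ∧ l ∈ e₂ := by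
  have hspec := p.take_spec hl
  set q := p.takeUntil l hl with hq
  set r := p.dropUntil l hl with hr
  obtain ⟨u, hu⟩ := exists_last_edge q hlx.symm
  obtain ⟨v, hv⟩ := exists_first_edge r hly
  have hedges : p.edges = q.edges ++ r.edges := by
    rw [← hspec, SimpleGraph.Walk.edges_append]
  have hnd : p.edges.Nodup := hp.isTrail.edges_nodup
  rw [hedges] at hnd
  have hne : s(l, u) ≠ s(l, v) := by
    intro h
    exact (List.disjoint_of_nodup_append hnd) (h ▸ hu) hv
  exact ⟨s(l, u), s(l, v), hne, by rw [hedges]; exact List.mem_append_left _ hu,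
    by rw [hedges]; exact List.mem_append_right _ hv, by simp, by simp⟩

/-- any support vertex of a cycle has two distinct incident edges on the cycle -/
lemma cycle_two_edges {x l : W} (c : G.Walk x x) (hc : c.IsCycle) (hl : l ∈ c.support) :
    ∃ e₁ e₂, e₁ ≠ e₂ ∧ e₁ ∈ c.edges ∧ e₂ ∈ c.edges ∧ l ∈ e₁ ∧ l ∈ e₂ := by
  have hrot := hc.rotate hl
  set d := c.rotate l hl with hd
  have hperm : d.edges ~r c.edges := c.rotate_edges l hl
  suffices h : ∃ e₁ e₂, e₁ ≠ e₂ ∧ e₁ ∈ d.edges ∧ e₂ ∈ d.edges ∧ l ∈ e₁ ∧ l ∈ e₂ by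
    obtain ⟨e₁, e₂, h1, h2, h3, h4, h5⟩ := h
    exact ⟨e₁, e₂, h1, hperm.perm.mem_iff.mp h2, hperm.perm.mem_iff.mp h3, h4, h5⟩
  clear_value d
  cases d with
  | nil => exact absurd rfl hrot.ne_nil
  | @cons _ u _ h w =>
    have hul : u ≠ l := fun huv => G.irrefl (huv ▸ h)
    obtain ⟨v, hv⟩ := exists_last_edge w hul
    refine ⟨s(l, u), s(l, v), ?_, by simp, ?_, by simp, by simp⟩
    · intro heq
      have hnd := hrot.isTrail.edges_nodup
      rw [SimpleGraph.Walk.edges_cons] at hnd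
      exact hnd.notMem (heq ▸ hv)
    · rw [SimpleGraph.Walk.edges_cons]
      exact List.mem_cons_of_mem _ hv


variable {V : Type} [Fintype V] [LinearOrder V]

def degE (E : Finset (Sym2 V)) (i : V) : ℕ := (E.filter (fun e => i ∈ e)).card

def dec : List V → Finset V → Finset (Sym2 V)
  | [], S => if h : S.Nonempty then {s(S.min' h, S.max' h)} else ∅
  | a :: c, S =>
      if h : (S \ (a :: c).toFinset).Nonempty then
        insert s((S \ (a :: c).toFinset).min' h, a)
          (dec c (S.erase ((S \ (a :: c).toFinset).min' h)))
      else ∅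

def gE (E : Finset (Sym2 V)) : SimpleGraph V := SimpleGraph.fromEdgeSet ↑E

lemma gE_mono {E E' : Finset (Sym2 V)} (h : E ⊆ E') : gE E ≤ gE E' :=
  SimpleGraph.fromEdgeSet_mono (by exact_mod_cast h)

lemma dec_nil (S : Finset V) (h : S.Nonempty) :
    dec [] S = {s(S.min' h, S.max' h)} := by
  simp only [dec, dif_pos h]

lemma dec_cons (a : V) (c : List V) (S : Finset V) (h : (S \ (a :: c).toFinset).Nonempty) :
    dec (a :: c) S = insert s((S \ (a :: c).toFinset).min' h, a)
      (dec c (S.erase ((S \ (a :: c).toFinset).min' h))) := by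
  simp only [dec, dif_pos h]

lemma degE_of_not_mem {E : Finset (Sym2 V)} {i : V} (h : ∀ e ∈ E, i ∉ e) : degE E i = 0 := by
  rw [degE, Finset.card_eq_zero, Finset.filter_eq_empty_iff]
  exact h

lemma degE_insert {E : Finset (Sym2 V)} {e : Sym2 V} (he : e ∉ E) (i : V) :
    degE (insert e E) i = (if i ∈ e then 1 else 0) + degE E i := by
  rw [degE, Finset.filter_insert]
  split_ifs with h
  · rw [Finset.card_insert_of_notMem (fun hc => he (Finset.mem_of_mem_filter _ hc))]
    rw [degE]; omega
  · rw [degE, Nat.zero_add]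

lemma dec_spec : ∀ (c : List V) (S : Finset V), (∀ a ∈ c, a ∈ S) → S.card = c.length + 2 →
    (∀ e ∈ dec c S, ¬ e.IsDiag ∧ ∀ x ∈ e, x ∈ S) ∧
    (dec c S).card = c.length + 1 ∧
    (∀ x ∈ S, ∀ y ∈ S, (gE (dec c S)).Reachable x y) ∧
    (gE (dec c S)).IsAcyclic ∧
    (∀ i, degE (dec c S) i = if i ∈ S then 1 + c.count i else 0) := by
  intro c
  induction c with
  | nil =>
    intro S _ hcard
    have hS : S.Nonempty := Finset.card_pos.mp (by omega)
    have hlt : S.min' hS < S.max' hS := S.min'_lt_max'_of_card (by omega)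
    set u := S.min' hS
    set v := S.max' hS
    have huv : u ≠ v := ne_of_lt hlt
    have huS : u ∈ S := S.min'_mem hS
    have hvS : v ∈ S := S.max'_mem hS
    have hSuv : S = {u, v} := by
      apply (Finset.eq_of_subset_of_card_le (fun x hx => ?_) (by simp [Finset.card_pair huv, hcard])).symm
      · simp only [Finset.mem_insert, Finset.mem_singleton] at hx
        rcases hx with rfl | rfl <;> assumption
    rw [dec_nil S hS]
    have hadj : (gE ({s(u, v)} : Finset (Sym2 V))).Adj u v := by
      rw [gE, SimpleGraph.fromEdgeSet_adj]
      exact ⟨by simp, huv⟩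
    refine ⟨?_, by simp, ?_, ?_, ?_⟩
    · intro e he
      simp only [Finset.mem_singleton] at he
      subst he
      refine ⟨by rw [Sym2.mk_isDiag_iff]; exact huv, ?_⟩
      intro x hx
      rw [Sym2.mem_iff] at hx
      rcases hx with rfl | rfl <;> assumption
    · intro x hx y hy
      rw [hSuv] at hx hy
      simp only [Finset.mem_insert, Finset.mem_singleton] at hx hy
      rcases hx with rfl | rfl <;> rcases hy with rfl | rfl
      · rfl
      · exact hadj.reachable
      · exact hadj.symm.reachable
      · rfl
    · intro w c hc
      have h3 := hc.three_le_length
      cases c with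
      | nil => simp at h3
      | @cons _ b _ h1 c' =>
        cases c' with
        | nil => simp at h3
        | @cons _ d _ h2 c'' =>
          have hnd := hc.isTrail.edges_nodup
          rw [gE, SimpleGraph.fromEdgeSet_adj] at h1 h2
          simp only [Finset.coe_singleton, Set.mem_singleton_iff] at h1 h2
          have heq : s(w, b) = s(b, d) := h1.1.trans h2.1.symm
          simp only [SimpleGraph.Walk.edges_cons] at hnd
          exact (List.nodup_cons.mp hnd).1 (by rw [heq]; exact List.mem_cons_self)
    · intro i
      rw [degE]
      by_cases hi : i ∈ S
      · rw [if_pos hi, List.count_nil]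
        have : Finset.filter (fun e => i ∈ e) {s(u, v)} = {s(u, v)} := by
          rw [Finset.filter_eq_self]
          intro e he
          simp only [Finset.mem_singleton] at he
          subst he
          rw [hSuv] at hi
          simp only [Finset.mem_insert, Finset.mem_singleton] at hi
          rw [Sym2.mem_iff]
          exact hi
        rw [this]; simp
      · rw [if_neg hi]
        rw [Finset.card_eq_zero, Finset.filter_eq_empty_iff]
        intro e he
        simp only [Finset.mem_singleton] at he
        subst he
        rw [Sym2.mem_iff]
        rintro (rfl | rfl) <;> exact hi (by assumption)
  | cons a c' ih =>
    intro S hsub hcard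
    have haS : a ∈ S := hsub a List.mem_cons_self
    have hlen : (a :: c').length = c'.length + 1 := by simp
    have hTcard : (a :: c').toFinset.card ≤ c'.length + 1 := by
      calc (a :: c').toFinset.card ≤ (a :: c').length := (a :: c').toFinset_card_le
        _ = c'.length + 1 := hlen
    have hScard : S.card = c'.length + 3 := by rw [hcard, hlen]
    have hLcard : 2 ≤ (S \ (a :: c').toFinset).card := by
      have h1 : (S ∩ (a :: c').toFinset).card ≤ c'.length + 1 :=
        le_trans (Finset.card_le_card (Finset.inter_subset_right)) hTcard
      have h2 := Finset.card_sdiff_add_card_inter S (a :: c').toFinset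
      omega
    have h : (S \ (a :: c').toFinset).Nonempty := Finset.card_pos.mp (by omega)
    rw [dec_cons a c' S h]
    set l := (S \ (a :: c').toFinset).min' h with hldef
    have hlmem : l ∈ S \ (a :: c').toFinset := Finset.min'_mem _ _
    have hlS : l ∈ S := (Finset.mem_sdiff.mp hlmem).1
    have hlnot : l ∉ (a :: c').toFinset := (Finset.mem_sdiff.mp hlmem).2
    have hla : l ≠ a := fun hh => hlnot (by rw [hh]; simp)
    have hlc' : l ∉ c' := fun hc => hlnot (by simp [hc])
    set S' := S.erase l with hS'def
    have hS'card : S'.card = c'.length + 2 := by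
      rw [hS'def, Finset.card_erase_of_mem hlS]; omega
    have hsub' : ∀ b ∈ c', b ∈ S' := fun b hb =>
      Finset.mem_erase.mpr ⟨fun hbl => hlc' (hbl ▸ hb), hsub b (List.mem_cons_of_mem _ hb)⟩
    obtain ⟨ih1, ih2, ih3, ih4, ih5⟩ := ih S' hsub' hS'card
    set E' := dec c' S' with hE'def
    set e₀ := s(l, a) with he₀def
    have haS' : a ∈ S' := Finset.mem_erase.mpr ⟨fun hh => hla hh.symm, haS⟩
    have hlnotE' : ∀ e ∈ E', l ∉ e := by
      intro e he hle
      exact (Finset.mem_erase.mp ((ih1 e he).2 l hle)).1 rfl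
    have he₀E' : e₀ ∉ E' := fun hmem => hlnotE' _ hmem (by rw [he₀def]; simp)
    refine ⟨?_, ?_, ?_, ?_, ?_⟩
    · intro e he
      rcases Finset.mem_insert.mp he with rfl | he'
      · refine ⟨by rw [he₀def]; simp [hla], ?_⟩
        intro x hx
        rw [he₀def, Sym2.mem_iff] at hx
        rcases hx with rfl | rfl
        · exact hlS
        · exact haS
      · obtain ⟨hd, hin⟩ := ih1 e he'
        exact ⟨hd, fun x hx => Finset.mem_of_mem_erase (hin x hx)⟩
    · rw [Finset.card_insert_of_notMem he₀E', ih2, hlen]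
    · have hmono : gE E' ≤ gE (insert e₀ E') := gE_mono (Finset.subset_insert _ _)
      have hadj : (gE (insert e₀ E')).Adj l a := by
        rw [gE, SimpleGraph.fromEdgeSet_adj]
        exact ⟨by simp [he₀def], hla⟩
      have key : ∀ x ∈ S, (gE (insert e₀ E')).Reachable x a := by
        intro x hx
        by_cases hxl : x = l
        · subst hxl; exact hadj.reachable
        · exact (ih3 x (Finset.mem_erase.mpr ⟨hxl, hx⟩) a haS').mono hmono
      intro x hx y hy
      exact (key x hx).trans (key y hy).symm
    · intro w c hc
      have hE : ∀ e ∈ c.edges, e ∈ insert e₀ E' := by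
        intro e hme
        have h2 := SimpleGraph.Walk.edges_subset_edgeSet c hme
        rw [gE, SimpleGraph.edgeSet_fromEdgeSet] at h2
        exact_mod_cast h2.1
      by_cases hlsup : l ∈ c.support
      · obtain ⟨e₁, e₂, hne, h1, h2, hl1, hl2⟩ := cycle_two_edges c hc hlsup
        have uniq : ∀ e ∈ c.edges, l ∈ e → e = e₀ := by
          intro e hme hle
          rcases Finset.mem_insert.mp (hE e hme) with rfl | hmem
          · rfl
          · exact absurd hle (hlnotE' e hmem)
        exact hne ((uniq e₁ h1 hl1).trans (uniq e₂ h2 hl2).symm)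
      · have hedges : ∀ e ∈ c.edges, e ∈ (gE E').edgeSet := by
          intro e hme
          have he2 := SimpleGraph.Walk.edges_subset_edgeSet c hme
          rw [gE, SimpleGraph.edgeSet_fromEdgeSet] at he2 ⊢
          refine ⟨?_, he2.2⟩
          rcases Finset.mem_insert.mp (hE e hme) with rfl | hm
          · exact absurd (SimpleGraph.Walk.fst_mem_support_of_mem_edges c hme) hlsup
          · exact_mod_cast hm
        exact ih4 (c.transfer (gE E') hedges) (hc.transfer hedges)
    · intro i
      rw [degE_insert he₀E' i, ih5 i]
      by_cases hil : i = l
      · subst hil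
        have hd0 : degE E' l = 0 := degE_of_not_mem hlnotE'
        have hcnt : (a :: c').count l = 0 := by
          rw [List.count_eq_zero]
          intro hmem
          exact hlnot (List.mem_toFinset.mpr hmem)
        rw [hcnt]
        have hiS' : l ∉ S' := fun hh => (Finset.mem_erase.mp hh).1 rfl
        rw [if_neg hiS', if_pos hlS]
        simp [he₀def]
      · by_cases hiS : i ∈ S
        · have hiS' : i ∈ S' := Finset.mem_erase.mpr ⟨hil, hiS⟩
          rw [if_pos hiS', if_pos hiS]
          have hmem_iff : (i ∈ e₀) ↔ i = a := by
            rw [he₀def, Sym2.mem_iff]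
            simp [fun hh : i = l => hil hh]
          rw [List.count_cons]
          split_ifs with h1 h2 h3
          · omega
          · exact absurd (hmem_iff.mp h1) (fun hh => h2 (by simp [hh]))
          · exact absurd (hmem_iff.mpr ((by simpa using h3 : a = i)).symm) h1
          · omega
        · have hiS' : i ∉ S' := fun hh => hiS (Finset.mem_of_mem_erase hh)
          rw [if_neg hiS', if_neg hiS]
          have : i ∉ e₀ := by
            rw [he₀def, Sym2.mem_iff]
            push_neg
            exact ⟨fun hh => hiS (hh ▸ hlS), fun hh => hiS (hh ▸ haS)⟩
          simp [this]

end Stmt7Aux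

namespace Stmt7Aux2
open Stmt7Aux
variable {V : Type} [Fintype V] [LinearOrder V]

lemma sdiff_nonempty (a : V) (r : List V) (S : Finset V)
    (hcard : S.card = (a :: r).length + 2) : (S \ (a :: r).toFinset).Nonempty := by
  have hTcard : (a :: r).toFinset.card ≤ r.length + 1 := by
    calc (a :: r).toFinset.card ≤ (a :: r).length := (a :: r).toFinset_card_le
      _ = r.length + 1 := by simp
  have h1 : (S ∩ (a :: r).toFinset).card ≤ r.length + 1 :=
    le_trans (Finset.card_le_card (Finset.inter_subset_right)) hTcard
  have h2 := Finset.card_sdiff_add_card_inter S (a :: r).toFinset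
  have hScard : S.card = r.length + 3 := by simpa using hcard
  exact Finset.card_pos.mp (by omega)

lemma tail_facts (a : V) (r : List V) (S : Finset V)
    (hsub : ∀ b ∈ a :: r, b ∈ S) (hcard : S.card = (a :: r).length + 2)
    (h : (S \ (a :: r).toFinset).Nonempty) :
    (S \ (a :: r).toFinset).min' h ∈ S ∧ (S \ (a :: r).toFinset).min' h ≠ a ∧
    (S \ (a :: r).toFinset).min' h ∉ r ∧
    (∀ b ∈ r, b ∈ S.erase ((S \ (a :: r).toFinset).min' h)) ∧
    (S.erase ((S \ (a :: r).toFinset).min' h)).card = r.length + 2 := by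
  set l := (S \ (a :: r).toFinset).min' h with hldef
  have hlmem : l ∈ S \ (a :: r).toFinset := Finset.min'_mem _ _
  have hlS : l ∈ S := (Finset.mem_sdiff.mp hlmem).1
  have hlnot : l ∉ (a :: r).toFinset := (Finset.mem_sdiff.mp hlmem).2
  have hla : l ≠ a := fun hh => hlnot (by rw [hh]; simp)
  have hlr : l ∉ r := fun hc => hlnot (by simp [hc])
  refine ⟨hlS, hla, hlr, ?_, ?_⟩
  · exact fun b hb => Finset.mem_erase.mpr
      ⟨fun hbl => hlr (hbl ▸ hb), hsub b (List.mem_cons_of_mem _ hb)⟩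
  · rw [Finset.card_erase_of_mem hlS]
    have : S.card = r.length + 3 := by simpa using hcard
    omega

lemma dec_inj : ∀ (c c₂ : List V) (S : Finset V),
    (∀ b ∈ c, b ∈ S) → S.card = c.length + 2 →
    (∀ b ∈ c₂, b ∈ S) → S.card = c₂.length + 2 →
    dec c S = dec c₂ S → c = c₂ := by
  intro c
  induction c with
  | nil =>
    intro c₂ S _ hcard _ hcard₂ _
    have : c₂.length = 0 := by simp at hcard; omega
    exact (List.length_eq_zero_iff.mp this).symm
  | cons a r ih =>
    intro c₂ S hsub hcard hsub₂ hcard₂ hEq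
    cases c₂ with
    | nil => simp at hcard hcard₂; omega
    | cons a₂ r₂ =>
      have h : (S \ (a :: r).toFinset).Nonempty := sdiff_nonempty a r S hcard
      have h₂ : (S \ (a₂ :: r₂).toFinset).Nonempty := sdiff_nonempty a₂ r₂ S hcard₂
      obtain ⟨hlS, hla, hlr, htail, hcardtail⟩ := tail_facts a r S hsub hcard h
      obtain ⟨hlS₂, hla₂, hlr₂, htail₂, hcardtail₂⟩ := tail_facts a₂ r₂ S hsub₂ hcard₂ h₂
      set l := (S \ (a :: r).toFinset).min' h with hldef
      set l₂ := (S \ (a₂ :: r₂).toFinset).min' h₂ with hl₂def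
      -- the two leaf sets agree, so l = l₂
      obtain ⟨_, _, _, _, hdeg⟩ := dec_spec (a :: r) S hsub hcard
      obtain ⟨_, _, _, _, hdeg₂⟩ := dec_spec (a₂ :: r₂) S hsub₂ hcard₂
      have hset : S \ (a :: r).toFinset = S \ (a₂ :: r₂).toFinset := by
        ext i
        simp only [Finset.mem_sdiff, List.mem_toFinset]
        constructor
        · rintro ⟨hiS, hnot⟩
          refine ⟨hiS, fun hmem => ?_⟩
          have h1 := hdeg i
          have h2 := hdeg₂ i
          rw [hEq] at h1
          rw [if_pos hiS] at h1 h2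
          rw [h1] at h2
          have : (a :: r).count i = 0 := List.count_eq_zero.mpr hnot
          have : (a₂ :: r₂).count i = 0 := by omega
          exact (List.count_eq_zero.mp this) hmem
        · rintro ⟨hiS, hnot⟩
          refine ⟨hiS, fun hmem => ?_⟩
          have h1 := hdeg i
          have h2 := hdeg₂ i
          rw [hEq] at h1
          rw [if_pos hiS] at h1 h2
          rw [h1] at h2
          have : (a₂ :: r₂).count i = 0 := List.count_eq_zero.mpr hnot
          have : (a :: r).count i = 0 := by omega
          exact (List.count_eq_zero.mp this) hmem
      have hll : l = l₂ := by rw [hldef, hl₂def]; congr 1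
      -- unfold both decodes
      rw [dec_cons a r S h, dec_cons a₂ r₂ S h₂, ← hldef, ← hl₂def, ← hll] at hEq
      obtain ⟨hE₁, _, _, _, _⟩ := dec_spec r (S.erase l) htail hcardtail
      have hlnotE₁ : ∀ e ∈ dec r (S.erase l), l ∉ e := by
        intro e he hle
        exact (Finset.mem_erase.mp ((hE₁ e he).2 l hle)).1 rfl
      have hmem : s(l, a₂) ∈ insert s(l, a) (dec r (S.erase l)) := by
        rw [hEq]; exact Finset.mem_insert_self _ _
      have haa : a = a₂ := by
        rcases Finset.mem_insert.mp hmem with heq | hmem'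
        · rw [Sym2.eq_iff] at heq
          rcases heq with ⟨-, h'⟩ | ⟨h1', h2'⟩
          · exact h'.symm
          · exact absurd h1' hla
        · exact absurd (Sym2.mem_mk_left l a₂) (hlnotE₁ _ hmem')
      subst haa
      -- erase the common edge
      have he₀E₁ : s(l, a) ∉ dec r (S.erase l) := fun hm => hlnotE₁ _ hm (by simp)
      rw [← hll] at htail₂ hcardtail₂
      obtain ⟨hE₂, _, _, _, _⟩ := dec_spec r₂ (S.erase l) htail₂ hcardtail₂
      have he₀E₂ : s(l, a) ∉ dec r₂ (S.erase l) := by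
        intro hm
        exact (Finset.mem_erase.mp ((hE₂ _ hm).2 l (by simp))).1 rfl
      have htails : dec r (S.erase l) = dec r₂ (S.erase l) := by
        have := congrArg (fun E => Finset.erase E s(l, a)) hEq
        simpa [Finset.erase_insert he₀E₁, Finset.erase_insert he₀E₂] using this
      rw [ih r₂ (S.erase l) htail hcardtail htail₂ hcardtail₂ htails]

end Stmt7Aux2

namespace Stmt7Aux3
open Stmt7Aux Stmt7Aux2
variable {V : Type} [Fintype V] [LinearOrder V]

lemma exists_other {l : V} {e : Sym2 V} (hl : l ∈ e) (hd : ¬e.IsDiag) :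
    ∃ a, a ≠ l ∧ e = s(l, a) := by
  induction e with
  | _ x y =>
    rw [Sym2.mem_iff] at hl
    rw [Sym2.mk_isDiag_iff] at hd
    rcases hl with rfl | rfl
    · exact ⟨y, fun hh => hd hh.symm, rfl⟩
    · exact ⟨x, hd, Sym2.eq_swap⟩

lemma handshake (S : Finset V) (E : Finset (Sym2 V))
    (hE : ∀ e ∈ E, ¬ e.IsDiag ∧ ∀ x ∈ e, x ∈ S) :
    ∑ i ∈ S, degE E i = 2 * E.card := by
  have : ∀ i ∈ S, degE E i = ∑ e ∈ E, if i ∈ e then 1 else 0 := by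
    intro i _
    rw [degE, Finset.card_filter]
  rw [Finset.sum_congr rfl this, Finset.sum_comm]
  have h2 : ∀ e ∈ E, (∑ i ∈ S, if i ∈ e then 1 else 0) = 2 := by
    intro e he
    obtain ⟨hd, hin⟩ := hE e he
    induction e with
    | _ x y =>
      rw [Sym2.mk_isDiag_iff] at hd
      have hfil : (S.filter (fun i => i ∈ s(x, y))) = {x, y} := by
        ext i
        simp only [Finset.mem_filter, Sym2.mem_iff, Finset.mem_insert, Finset.mem_singleton]
        constructor
        · exact fun h => h.2
        · rintro (rfl | rfl)
          · exact ⟨hin i (by simp), Or.inl rfl⟩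
          · exact ⟨hin i (by simp), Or.inr rfl⟩
      rw [← Finset.card_filter, hfil, Finset.card_pair hd]
  rw [Finset.sum_congr rfl h2, Finset.sum_const, smul_eq_mul, mul_comm]

/-- weak "tree on S" predicate -/
def TOn (S : Finset V) (E : Finset (Sym2 V)) : Prop :=
  (∀ e ∈ E, ¬ e.IsDiag ∧ ∀ x ∈ e, x ∈ S) ∧ E.card + 1 = S.card ∧
  (∀ x ∈ S, ∀ y ∈ S, (gE E).Reachable x y)

lemma deg_pos (S : Finset V) (E : Finset (Sym2 V)) (hT : TOn S E) (h2 : 2 ≤ S.card) :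
    ∀ i ∈ S, 1 ≤ degE E i := by
  obtain ⟨hE, hcard, hreach⟩ := hT
  intro i hi
  obtain ⟨j, hj, hji⟩ := Finset.exists_mem_ne (show 1 < S.card by omega) i
  obtain ⟨w⟩ := hreach i hi j hj
  obtain ⟨u, hu⟩ := exists_first_edge w hji.symm
  have hmem := SimpleGraph.Walk.edges_subset_edgeSet w hu
  rw [gE, SimpleGraph.edgeSet_fromEdgeSet] at hmem
  have : s(i, u) ∈ E.filter (fun e => i ∈ e) := by
    rw [Finset.mem_filter]
    exact ⟨by exact_mod_cast hmem.1, by simp⟩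
  rw [degE]
  exact Finset.card_pos.mpr ⟨_, this⟩

lemma dec_surj : ∀ (k : ℕ) (S : Finset V) (E : Finset (Sym2 V)), S.card = k + 2 → TOn S E →
    ∃ c : List V, (∀ b ∈ c, b ∈ S) ∧ c.length = k ∧ dec c S = E := by
  intro k
  induction k with
  | zero =>
    intro S E hcard hT
    obtain ⟨hE, hEcard, _⟩ := hT
    refine ⟨[], by simp, rfl, ?_⟩
    have hS : S.Nonempty := Finset.card_pos.mp (by omega)
    rw [dec_nil S hS]
    have hE1 : E.card = 1 := by omega
    obtain ⟨e, he⟩ := Finset.card_eq_one.mp hE1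
    obtain ⟨hd, hin⟩ := hE e (he ▸ Finset.mem_singleton_self e)
    rw [he]
    congr 1
    induction e with
    | _ x y =>
      rw [Sym2.mk_isDiag_iff] at hd
      have hx : x ∈ S := hin x (by simp)
      have hy : y ∈ S := hin y (by simp)
      have hSxy : S = {x, y} := by
        apply (Finset.eq_of_subset_of_card_le ?_ (by rw [Finset.card_pair hd]; omega)).symm
        intro i hi
        simp only [Finset.mem_insert, Finset.mem_singleton] at hi
        rcases hi with rfl | rfl <;> assumption
      have hminmem : S.min' hS ∈ ({x, y} : Finset V) := hSxy ▸ S.min'_mem hS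
      have hmaxmem : S.max' hS ∈ ({x, y} : Finset V) := hSxy ▸ S.max'_mem hS
      have hmm : S.min' hS ≠ S.max' hS :=
        ne_of_lt (S.min'_lt_max'_of_card (by omega))
      simp only [Finset.mem_insert, Finset.mem_singleton] at hminmem hmaxmem
      rcases hminmem with h1 | h1 <;> rcases hmaxmem with h2 | h2
      · exact absurd (h1.trans h2.symm) hmm
      · rw [h1, h2]
      · rw [h1, h2, Sym2.eq_swap]
      · exact absurd (h1.trans h2.symm) hmm
  | succ k ih =>
    intro S E hcard hT
    obtain ⟨hE, hEcard, hreach⟩ := hT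
    -- find the minimal leaf
    have hpos := deg_pos S E ⟨hE, hEcard, hreach⟩ (by omega)
    have hsum := handshake S E hE
    have hLne : (S.filter (fun i => degE E i = 1)).Nonempty := by
      by_contra hc
      rw [Finset.not_nonempty_iff_eq_empty, Finset.filter_eq_empty_iff] at hc
      have h2 : ∀ i ∈ S, 2 ≤ degE E i := by
        intro i hi
        have := hpos i hi
        have := hc hi
        omega
      have := Finset.sum_le_sum h2
      rw [hsum, Finset.sum_const, smul_eq_mul] at this
      omega
    set l := (S.filter (fun i => degE E i = 1)).min' hLne with hldef
    have hlmem := Finset.min'_mem _ hLne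
    rw [Finset.mem_filter] at hlmem
    obtain ⟨hlS, hldeg⟩ := hlmem
    -- the unique edge at l
    obtain ⟨e₀, he₀⟩ := Finset.card_eq_one.mp hldeg
    have he₀mem : e₀ ∈ E.filter (fun e => l ∈ e) := he₀ ▸ Finset.mem_singleton_self e₀
    rw [Finset.mem_filter] at he₀mem
    obtain ⟨he₀E, hle₀⟩ := he₀mem
    obtain ⟨a, hal, he₀eq⟩ := exists_other hle₀ (hE e₀ he₀E).1
    have haS : a ∈ S := (hE e₀ he₀E).2 a (by rw [he₀eq]; simp)
    have huniq : ∀ e ∈ E, l ∈ e → e = e₀ := by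
      intro e he hle
      have : e ∈ E.filter (fun e => l ∈ e) := Finset.mem_filter.mpr ⟨he, hle⟩
      rw [he₀] at this
      exact Finset.mem_singleton.mp this
    set S' := S.erase l with hS'def
    set E₁ := E.erase e₀ with hE₁def
    have hS'card : S'.card = k + 2 := by rw [hS'def, Finset.card_erase_of_mem hlS]; omega
    have haS' : a ∈ S' := Finset.mem_erase.mpr ⟨fun hh => hal hh, haS⟩
    have hlnotE₁ : ∀ e ∈ E₁, l ∉ e := by
      intro e he hle
      obtain ⟨hne, heE⟩ := Finset.mem_erase.mp he
      exact hne (huniq e heE hle)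
    -- E₁ is a tree on S'
    have hT' : TOn S' E₁ := by
      refine ⟨?_, ?_, ?_⟩
      · intro e he
        obtain ⟨hd, hin⟩ := hE e (Finset.mem_of_mem_erase he)
        refine ⟨hd, fun x hx => Finset.mem_erase.mpr ⟨?_, hin x hx⟩⟩
        intro hxl
        exact hlnotE₁ e he (hxl ▸ hx)
      · rw [hE₁def, Finset.card_erase_of_mem he₀E]; omega
      · intro x hx y hy
        obtain ⟨hxl, hxS⟩ := Finset.mem_erase.mp hx
        obtain ⟨hyl, hyS⟩ := Finset.mem_erase.mp hy
        obtain ⟨w⟩ := hreach x hxS y hyS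
        set p := w.toPath with hpdef
        have hlsup : l ∉ (p : (gE E).Walk x y).support := by
          intro hlsup
          obtain ⟨e₁, e₂, hne, h1, h2, hl1, hl2⟩ :=
            path_two_edges (p : (gE E).Walk x y) p.2 hlsup (Ne.symm hxl) (Ne.symm hyl)
          have hmem : ∀ e ∈ (p : (gE E).Walk x y).edges, e ∈ E := by
            intro e he
            have := SimpleGraph.Walk.edges_subset_edgeSet _ he
            rw [gE, SimpleGraph.edgeSet_fromEdgeSet] at this
            exact_mod_cast this.1
          exact hne ((huniq e₁ (hmem e₁ h1) hl1).trans (huniq e₂ (hmem e₂ h2) hl2).symm)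
        have hedges : ∀ e ∈ (p : (gE E).Walk x y).edges, e ∈ (gE E₁).edgeSet := by
          intro e he
          have h2 := SimpleGraph.Walk.edges_subset_edgeSet _ he
          rw [gE, SimpleGraph.edgeSet_fromEdgeSet] at h2 ⊢
          refine ⟨?_, h2.2⟩
          have heE : e ∈ E := by exact_mod_cast h2.1
          have hene : e ≠ e₀ := by
            intro heq
            subst heq
            rw [he₀eq] at he
            exact hlsup (SimpleGraph.Walk.fst_mem_support_of_mem_edges _ he)
          exact_mod_cast Finset.mem_erase.mpr ⟨hene, heE⟩
        exact ((p : (gE E).Walk x y).transfer (gE E₁) hedges).reachable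
    obtain ⟨c, hcsub, hclen, hcdec⟩ := ih S' E₁ hS'card hT'
    -- degrees of E in terms of the code a :: c
    obtain ⟨_, _, _, _, hdeg₁⟩ := dec_spec c S' hcsub (by omega)
    rw [hcdec] at hdeg₁
    have hEins : E = insert e₀ E₁ := by
      rw [hE₁def, Finset.insert_erase he₀E]
    have he₀E₁ : e₀ ∉ E₁ := Finset.notMem_erase _ _
    have hdegE : ∀ i, degE E i = (if i ∈ e₀ then 1 else 0) + degE E₁ i := by
      intro i
      rw [hEins, degE_insert he₀E₁]
    have hlc : l ∉ c := fun hh => (Finset.mem_erase.mp (hcsub l hh)).1 rfl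
    -- identify the sdiff set with the leaf set
    have hset : S \ (a :: c).toFinset = S.filter (fun i => degE E i = 1) := by
      ext i
      simp only [Finset.mem_sdiff, List.mem_toFinset, Finset.mem_filter]
      constructor
      · rintro ⟨hiS, hnot⟩
        refine ⟨hiS, ?_⟩
        by_cases hil : i = l
        · subst hil; exact hldeg
        · have hiS' : i ∈ S' := Finset.mem_erase.mpr ⟨hil, hiS⟩
          have h1 := hdeg₁ i
          rw [if_pos hiS'] at h1
          have hia : i ≠ a := fun hh => hnot (hh ▸ (List.mem_cons_self : a ∈ a :: c))
          have hic : i ∉ c := fun hh => hnot (List.mem_cons_of_mem _ hh)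
          have hie₀ : i ∉ e₀ := by
            rw [he₀eq, Sym2.mem_iff]
            push_neg
            exact ⟨hil, hia⟩
          rw [hdegE i, if_neg hie₀, h1, List.count_eq_zero.mpr hic]
      · rintro ⟨hiS, hideg⟩
        refine ⟨hiS, fun hmem => ?_⟩
        by_cases hil : i = l
        · subst hil
          rcases List.mem_cons.mp hmem with rfl | hh
          · exact hal rfl
          · exact hlc hh
        · have hiS' : i ∈ S' := Finset.mem_erase.mpr ⟨hil, hiS⟩
          have h1 := hdeg₁ i
          rw [if_pos hiS'] at h1
          rw [hdegE i, h1] at hideg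
          rcases List.mem_cons.mp hmem with rfl | hh
          · rw [if_pos (by rw [he₀eq]; simp)] at hideg
            omega
          · have := List.count_pos_iff.mpr hh
            split_ifs at hideg <;> omega
    have hne' : (S \ (a :: c).toFinset).Nonempty := by
      rw [hset]; exact hLne
    have hmin : (S \ (a :: c).toFinset).min' hne' = l := by
      rw [hldef]; congr 1
    refine ⟨a :: c, ?_, by simp [hclen], ?_⟩
    · intro b hb
      rcases List.mem_cons.mp hb with rfl | hh
      · exact haS
      · exact Finset.mem_of_mem_erase (hcsub b hh)
    · rw [dec_cons a c S hne', hmin, ← hS'def, hcdec, ← he₀eq, ← hEins]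

end Stmt7Aux3

namespace Stmt7Final
open Stmt7Aux Stmt7Aux2 Stmt7Aux3

theorem count_ofFn' {α} [DecidableEq α] {m : ℕ} (g : Fin m → α) (i : α) :
    (List.ofFn g).count i = (univ.filter (fun k => g k = i)).card := by
  induction m with
  | zero => simp
  | succ m ih =>
    rw [List.ofFn_succ, List.count_cons, ih (fun k => g k.succ), Fin.univ_succ]
    have himg : Finset.filter (fun k => g k = i)
          (Finset.map { toFun := Fin.succ, inj' := Fin.succ_injective m } univ)
        = Finset.map { toFun := Fin.succ, inj' := Fin.succ_injective m }
          (Finset.filter (fun k => g k.succ = i) univ) := by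
      rw [Finset.filter_map]
      rfl
    rw [Finset.filter_cons]
    by_cases h0 : g 0 = i <;> simp [h0, himg]

theorem count_ofFn {α} [DecidableEq α] {m : ℕ} (g : Fin m → α) (i : α) :
    (List.ofFn g).count i = Nat.card {k // g k = i} := by
  rw [Nat.card_eq_fintype_card, Fintype.card_subtype, count_ofFn']

variable {V : Type} [Fintype V] [LinearOrder V]

lemma ncard_neighborSet (E : Finset (Sym2 V)) (hE : ∀ e ∈ E, ¬e.IsDiag) (i : V) :
    ((gE E).neighborSet i).ncard = degE E i := by
  classical
  have himg : (fun j => s(i, j)) '' ((gE E).neighborSet i)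
      = ↑(E.filter (fun e => i ∈ e)) := by
    ext e
    constructor
    · rintro ⟨j, hj, rfl⟩
      rw [SimpleGraph.mem_neighborSet, gE, SimpleGraph.fromEdgeSet_adj] at hj
      rw [Finset.coe_filter]
      exact ⟨by exact_mod_cast hj.1, by simp⟩
    · intro he
      rw [Finset.coe_filter] at he
      obtain ⟨heE, hie⟩ := he
      obtain ⟨a, hai, heq⟩ := exists_other hie (hE e heE)
      refine ⟨a, ?_, heq.symm⟩
      rw [SimpleGraph.mem_neighborSet, gE, SimpleGraph.fromEdgeSet_adj]
      exact ⟨by rw [← heq]; exact_mod_cast heE, fun hh => hai hh.symm⟩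
  have hinj : Set.InjOn (fun j => s(i, j)) ((gE E).neighborSet i) := by
    intro x hx y hy hxy
    simp only [Sym2.eq_iff] at hxy
    rcases hxy with ⟨-, h⟩ | ⟨h1, h2⟩
    · exact h
    · rw [SimpleGraph.mem_neighborSet] at hx
      exact absurd h2.symm hx.ne
  calc ((gE E).neighborSet i).ncard
      = ((fun j => s(i, j)) '' ((gE E).neighborSet i)).ncard :=
        (Set.ncard_image_of_injOn hinj).symm
    _ = degE E i := by rw [himg, Set.ncard_coe_finset, degE]

end Stmt7Final

/-- There is a bijection `Θ` between the functions `f : {2,...,n-1} → [n]` and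
the trees on `[n]` (rooted at vertex 1), such that for every `f` and every
vertex `i`, the degree of `i` in the tree `Θ(f)` equals `1 + |f⁻¹(i)|`. -/
theorem stmt7 (n : ℕ) (hn : 2 ≤ n) :
    ∃ Θ : ({i : ℕ // 2 ≤ i ∧ i ≤ n - 1} → Fin n) ≃
            {G : SimpleGraph (Fin n) // G.IsTree},
      ∀ (f : {i : ℕ // 2 ≤ i ∧ i ≤ n - 1} → Fin n) (i : Fin n),
        (((Θ f : {G : SimpleGraph (Fin n) // G.IsTree}).1.neighborSet i).ncard) =
          1 + Nat.card {j // f j = i} := by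
  classical
  open Stmt7Aux Stmt7Aux2 Stmt7Aux3 Stmt7Final in
  -- the reindexing equivalence
  let e : {i : ℕ // 2 ≤ i ∧ i ≤ n - 1} ≃ Fin (n - 2) :=
    { toFun := fun i => ⟨i.1 - 2, by obtain ⟨h1, h2⟩ := i.2; omega⟩
      invFun := fun k => ⟨k.1 + 2, by have := k.2; omega⟩
      left_inv := fun i => by
        ext
        obtain ⟨h1, h2⟩ := i.2
        simp
        omega
      right_inv := fun k => by ext; simp }
  have hcu : (Finset.univ : Finset (Fin n)).card = (n - 2) + 2 := by
    rw [Finset.card_univ, Fintype.card_fin]; omega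
  have hval : ∀ g : Fin (n - 2) → Fin n,
      (∀ b ∈ List.ofFn g, b ∈ (Finset.univ : Finset (Fin n))) ∧
      (Finset.univ : Finset (Fin n)).card = (List.ofFn g).length + 2 := by
    intro g
    exact ⟨fun b _ => Finset.mem_univ b, by rw [List.length_ofFn]; exact hcu⟩
  have key : ∀ g : Fin (n - 2) → Fin n,
      (Stmt7Aux.gE (Stmt7Aux.dec (List.ofFn g) Finset.univ)).IsTree ∧
      (∀ i : Fin n, Stmt7Aux.degE (Stmt7Aux.dec (List.ofFn g) Finset.univ) i
        = 1 + (List.ofFn g).count i) ∧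
      (∀ e ∈ Stmt7Aux.dec (List.ofFn g) Finset.univ, ¬ e.IsDiag) := by
    intro g
    obtain ⟨h1, h2, h3, h4, h5⟩ :=
      Stmt7Aux.dec_spec (List.ofFn g) Finset.univ (hval g).1 (hval g).2
    refine ⟨⟨?_, h4⟩, ?_, fun e he => (h1 e he).1⟩
    · rw [SimpleGraph.connected_iff]
      refine ⟨fun x y => h3 x (Finset.mem_univ x) y (Finset.mem_univ y), ⟨⟨0, by omega⟩⟩⟩
    · intro i
      rw [h5 i, if_pos (Finset.mem_univ i)]
  let Φ : (Fin (n - 2) → Fin n) → {G : SimpleGraph (Fin n) // G.IsTree} :=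
    fun g => ⟨Stmt7Aux.gE (Stmt7Aux.dec (List.ofFn g) Finset.univ), (key g).1⟩
  have hbij : Function.Bijective Φ := by
    constructor
    · intro g g' hgg
      have h1 : (Φ g).1.edgeSet = (Φ g').1.edgeSet := by rw [hgg]
      rw [show (Φ g).1 = Stmt7Aux.gE (Stmt7Aux.dec (List.ofFn g) Finset.univ) from rfl,
        show (Φ g').1 = Stmt7Aux.gE (Stmt7Aux.dec (List.ofFn g') Finset.univ) from rfl,
        Stmt7Aux.gE, Stmt7Aux.gE, SimpleGraph.edgeSet_fromEdgeSet,
        SimpleGraph.edgeSet_fromEdgeSet] at h1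
      have hsets : Stmt7Aux.dec (List.ofFn g) Finset.univ
          = Stmt7Aux.dec (List.ofFn g') Finset.univ := by
        apply Finset.coe_injective
        ext ae
        constructor
        · intro hae
          have : ae ∈ (↑(Stmt7Aux.dec (List.ofFn g) Finset.univ) : Set (Sym2 (Fin n)))
              \ {e | e.IsDiag} := ⟨hae, (key g).2.2 ae hae⟩
          rw [← Sym2.diagSet_eq_setOfPred_isDiag, h1] at this
          exact this.1
        · intro hae
          have : ae ∈ (↑(Stmt7Aux.dec (List.ofFn g') Finset.univ) : Set (Sym2 (Fin n)))
              \ {e | e.IsDiag} := ⟨hae, (key g').2.2 ae hae⟩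
          rw [← Sym2.diagSet_eq_setOfPred_isDiag, ← h1] at this
          exact this.1
      exact List.ofFn_injective
        (Stmt7Aux2.dec_inj _ _ Finset.univ (hval g).1 (hval g).2 (hval g').1 (hval g').2 hsets)
    · rintro ⟨G, hG⟩
      have hcardE : G.edgeFinset.card + 1 = (Finset.univ : Finset (Fin n)).card := by
        rw [Finset.card_univ]
        exact hG.card_edgeFinset
      have hgEG : Stmt7Aux.gE G.edgeFinset = G := by
        rw [Stmt7Aux.gE, SimpleGraph.coe_edgeFinset, SimpleGraph.fromEdgeSet_edgeSet]
      have hTOn : Stmt7Aux3.TOn Finset.univ G.edgeFinset := by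
        refine ⟨?_, hcardE, ?_⟩
        · intro ed hed
          exact ⟨G.not_isDiag_of_mem_edgeSet (SimpleGraph.mem_edgeFinset.mp hed),
            fun x _ => Finset.mem_univ x⟩
        · intro x _ y _
          rw [hgEG]
          exact hG.isConnected.preconnected x y
      obtain ⟨c, hcsub, hclen, hcdec⟩ := Stmt7Aux3.dec_surj (n - 2) Finset.univ G.edgeFinset hcu hTOn
      refine ⟨fun k => c.get (Fin.cast hclen.symm k), Subtype.ext ?_⟩
      have hofn : List.ofFn (fun k => c.get (Fin.cast hclen.symm k)) = c := by
        apply List.ext_getElem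
        · rw [List.length_ofFn, hclen]
        · intro j h1 h2
          simp [List.getElem_ofFn]
      show Stmt7Aux.gE (Stmt7Aux.dec (List.ofFn _) Finset.univ) = G
      rw [hofn, hcdec, hgEG]
  refine ⟨(e.arrowCongr (Equiv.refl (Fin n))).trans (Equiv.ofBijective Φ hbij), ?_⟩
  intro f i
  set g : Fin (n - 2) → Fin n := fun k => f (e.symm k) with hgdef
  have hΘ : ((((e.arrowCongr (Equiv.refl (Fin n))).trans (Equiv.ofBijective Φ hbij)) f :
      {G : SimpleGraph (Fin n) // G.IsTree}) : {G : SimpleGraph (Fin n) // G.IsTree}).1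
      = Stmt7Aux.gE (Stmt7Aux.dec (List.ofFn g) Finset.univ) := rfl
  rw [hΘ, Stmt7Final.ncard_neighborSet _ (key g).2.2 i, (key g).2.1 i]
  congr 1
  rw [Stmt7Final.count_ofFn g i]
  apply Nat.card_congr
  exact (Equiv.subtypeEquiv e (fun j => by simp [hgdef])).symm
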